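/- Assume the noise-free model b = A x̄ (i.e., z = 0), let δ' ∈ (0,1) and γ > (1+δ')/(1−δ'), and let s̃ ≥ 1 be an integer with ρ₋(A, s̄+s̃) > 0. Set λ₀ = ‖Aᵀb‖_∞ and assume λ₀ > 0, let η ∈ (0,1) and K ∈ ℕ, and set λ = η^{K+1}λ₀. If x̂ ∈ ℝⁿ satisfies ‖x̂_{S̄ᶜ}‖₀ ≤ s̃ and ω_λ(x̂) ≤ δ'λ, then ‖x̂ − x̄‖₂ ≤ η^{K+1} · 2λ₀√s̄ / ρ₋(A, s̄+s̃). -/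

import Mathlib

open scoped BigOperators
open Matrix

noncomputable section

namespace PGH

/-- Euclidean dot product on `Fin n → ℝ`. -/
def dot {n : ℕ} (x y : Fin n → ℝ) : ℝ := ∑ i, x i * y i

/-- Squared Euclidean norm. -/
def sqnorm {n : ℕ} (x : Fin n → ℝ) : ℝ := ∑ i, (x i) ^ 2

/-- Euclidean (ℓ₂) norm. -/
noncomputable def l2 {n : ℕ} (x : Fin n → ℝ) : ℝ := Real.sqrt (sqnorm x)

/-- ℓ₁ norm. -/
def l1 {n : ℕ} (x : Fin n → ℝ) : ℝ := ∑ i, |x i|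

/-- ℓ∞ norm (maximum absolute coordinate). -/
noncomputable def linf {n : ℕ} (x : Fin n → ℝ) : ℝ := ⨆ i, |x i|

/-- Support of a vector. -/
def supp {n : ℕ} (x : Fin n → ℝ) : Finset (Fin n) := Finset.univ.filter (fun i => x i ≠ 0)

/-- Number of nonzero coordinates. -/
def l0 {n : ℕ} (x : Fin n → ℝ) : ℕ := (supp x).card

/-- Number of nonzero coordinates within the index set `S`
(i.e. `‖x_S‖₀` for the restriction of `x` to `S`). -/
def l0on {n : ℕ} (S : Finset (Fin n)) (x : Fin n → ℝ) : ℕ :=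
  (S.filter (fun i => x i ≠ 0)).card

/-- ℓ₁ norm of the restriction of `x` to the index set `S`. -/
def l1on {n : ℕ} (S : Finset (Fin n)) (x : Fin n → ℝ) : ℝ := ∑ i ∈ S, |x i|

/-- Gradient of `f(x) = (1/2)‖Ax - b‖₂²`, namely `Aᵀ(Ax - b)`. -/
def grad {m n : ℕ} (A : Matrix (Fin m) (Fin n) ℝ) (b : Fin m → ℝ) (x : Fin n → ℝ) :
    Fin n → ℝ :=
  Aᵀ.mulVec (A.mulVec x - b)

/-- Least-squares objective `f(x) = (1/2)‖Ax - b‖₂²`. -/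
def fls {m n : ℕ} (A : Matrix (Fin m) (Fin n) ℝ) (b : Fin m → ℝ) (x : Fin n → ℝ) : ℝ :=
  sqnorm (A.mulVec x - b) / 2

/-- ℓ₁-regularized least-squares objective `φ_λ(x) = f(x) + λ‖x‖₁`. -/
def phi {m n : ℕ} (A : Matrix (Fin m) (Fin n) ℝ) (b : Fin m → ℝ) (lam : ℝ)
    (x : Fin n → ℝ) : ℝ :=
  fls A b x + lam * l1 x

/-- Restricted maximal eigenvalue `ρ₊(A, s)`. -/
noncomputable def rhoPlus {m n : ℕ} (A : Matrix (Fin m) (Fin n) ℝ) (s : ℕ) : ℝ :=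
  sSup {r | ∃ x : Fin n → ℝ, x ≠ 0 ∧ l0 x ≤ s ∧ r = sqnorm (A.mulVec x) / sqnorm x}

/-- Restricted minimal eigenvalue `ρ₋(A, s)`. -/
noncomputable def rhoMinus {m n : ℕ} (A : Matrix (Fin m) (Fin n) ℝ) (s : ℕ) : ℝ :=
  sInf {r | ∃ x : Fin n → ℝ, x ≠ 0 ∧ l0 x ≤ s ∧ r = sqnorm (A.mulVec x) / sqnorm x}

/-- `ξ` is a subgradient of the ℓ₁ norm at `x`. -/
def IsSubgrad {n : ℕ} (x ξ : Fin n → ℝ) : Prop :=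
  ∀ i, (x i ≠ 0 → ξ i = Real.sign (x i)) ∧ (x i = 0 → |ξ i| ≤ 1)

/-- Optimality residue `ω_λ(x) = min_{ξ ∈ ∂‖x‖₁} ‖Aᵀ(Ax−b) + λξ‖_∞`. -/
noncomputable def omega {m n : ℕ} (A : Matrix (Fin m) (Fin n) ℝ) (b : Fin m → ℝ)
    (lam : ℝ) (x : Fin n → ℝ) : ℝ :=
  sInf {r | ∃ ξ : Fin n → ℝ, IsSubgrad x ξ ∧
    r = linf (fun i => grad A b x i + lam * ξ i)}

/-- The local model `ψ_{λ,L}(y; x)`. -/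
def psi {m n : ℕ} (A : Matrix (Fin m) (Fin n) ℝ) (b : Fin m → ℝ) (lam L : ℝ)
    (y x : Fin n → ℝ) : ℝ :=
  fls A b y + dot (grad A b y) (x - y) + L / 2 * sqnorm (x - y) + lam * l1 x

/-- The noise-domination condition
`λ ≥ max{4, (γ+1)/((1−δ')γ−(1+δ'))} ⬝ ‖Aᵀz‖_∞`. -/
def noiseCond {m n : ℕ} (A : Matrix (Fin m) (Fin n) ℝ) (z : Fin m → ℝ)
    (dp gam lam : ℝ) : Prop :=
  lam ≥ max 4 ((gam + 1) / ((1 - dp) * gam - (1 + dp))) * linf (Aᵀ.mulVec z)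


lemma sqnorm_nonneg {n : ℕ} (x : Fin n → ℝ) : 0 ≤ sqnorm x :=
  Finset.sum_nonneg fun _ _ => sq_nonneg _

lemma sqnorm_pos {n : ℕ} {x : Fin n → ℝ} (hx : x ≠ 0) : 0 < sqnorm x := by
  obtain ⟨i, hi⟩ : ∃ i, x i ≠ 0 := by
    by_contra h; push_neg at h; exact hx (funext h)
  exact Finset.sum_pos' (fun j _ => sq_nonneg _) ⟨i, Finset.mem_univ i, by positivity⟩

lemma abs_le_linf {n : ℕ} (v : Fin n → ℝ) (i : Fin n) : |v i| ≤ linf v := by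
  rw [linf]
  exact le_ciSup (f := fun j => |v j|) (Set.Finite.bddAbove (Set.finite_range _)) i

lemma dot_le_l1_mul_linf {n : ℕ} (x y : Fin n → ℝ) : dot x y ≤ l1 x * linf y := by
  rw [l1, Finset.sum_mul]
  refine Finset.sum_le_sum fun i _ => ?_
  calc x i * y i ≤ |x i * y i| := le_abs_self _
    _ = |x i| * |y i| := abs_mul _ _
    _ ≤ |x i| * linf y := mul_le_mul_of_nonneg_left (abs_le_linf y i) (abs_nonneg _)

lemma dot_add_smul {n : ℕ} (h g ξ : Fin n → ℝ) (lam : ℝ) :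
    dot h (fun i => g i + lam * ξ i) = dot h g + lam * dot h ξ := by
  simp only [dot, Finset.mul_sum, ← Finset.sum_add_distrib]
  exact Finset.sum_congr rfl fun i _ => by ring

lemma dot_transpose_mulVec {m n : ℕ} (A : Matrix (Fin m) (Fin n) ℝ)
    (h : Fin n → ℝ) (v : Fin m → ℝ) : dot h (Aᵀ.mulVec v) = dot (A.mulVec h) v := by
  simp only [dot, Matrix.mulVec, dotProduct, Matrix.transpose_apply,
    Finset.sum_mul, Finset.mul_sum]
  rw [Finset.sum_comm]
  exact Finset.sum_congr rfl fun i _ => Finset.sum_congr rfl fun j _ => by ring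

lemma dot_self_eq {n : ℕ} (x : Fin n → ℝ) : dot x x = sqnorm x := by
  simp [dot, sqnorm, sq]

lemma l1on_nonneg {n : ℕ} (S : Finset (Fin n)) (x : Fin n → ℝ) : 0 ≤ l1on S x :=
  Finset.sum_nonneg fun _ _ => abs_nonneg _

lemma l1on_le_sqrt {n : ℕ} (S : Finset (Fin n)) (x : Fin n → ℝ) :
    l1on S x ≤ Real.sqrt (S.card : ℝ) * l2 x := by
  have hcs := Finset.sum_mul_sq_le_sq_mul_sq S (fun _ => (1:ℝ)) (fun i => |x i|)
  simp only [one_pow, one_mul, sq_abs, Finset.sum_const, nsmul_eq_mul, mul_one] at hcs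
  have h1 : (l1on S x) ^ 2 ≤ (S.card : ℝ) * sqnorm x := by
    refine le_trans hcs ?_
    refine mul_le_mul_of_nonneg_left ?_ (by positivity)
    exact Finset.sum_le_sum_of_subset_of_nonneg (Finset.subset_univ S)
      (fun i _ _ => sq_nonneg _)
  have h2 : l1on S x = Real.sqrt ((l1on S x) ^ 2) :=
    (Real.sqrt_sq (l1on_nonneg S x)).symm
  rw [h2, l2, ← Real.sqrt_mul (x := (S.card : ℝ)) (Nat.cast_nonneg _)]
  exact Real.sqrt_le_sqrt h1

lemma IsSubgrad.abs_le' {n : ℕ} {x ξ : Fin n → ℝ} (h : IsSubgrad x ξ) (i : Fin n) :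
    |ξ i| ≤ 1 := by
  by_cases hx : x i = 0
  · exact (h i).2 hx
  · rw [(h i).1 hx]
    rcases lt_trichotomy (x i) 0 with hl | he | hg
    · simp [Real.sign_of_neg hl]
    · exact absurd he hx
    · simp [Real.sign_of_pos hg]

lemma IsSubgrad.mul_self' {n : ℕ} {x ξ : Fin n → ℝ} (h : IsSubgrad x ξ) (i : Fin n) :
    x i * ξ i = |x i| := by
  by_cases hx : x i = 0
  · simp [hx]
  · rw [(h i).1 hx]
    rcases lt_trichotomy (x i) 0 with hl | he | hg
    · rw [Real.sign_of_neg hl, abs_of_neg hl]; ring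
    · exact absurd he hx
    · rw [Real.sign_of_pos hg, abs_of_pos hg]; ring


theorem stmt18 {m n : ℕ} (A : Matrix (Fin m) (Fin n) ℝ) (b : Fin m → ℝ)
    (xbar : Fin n → ℝ) (hb : b = A.mulVec xbar)
    (dp gam : ℝ) (hdp0 : 0 < dp) (hdp1 : dp < 1)
    (hgam : gam > (1 + dp) / (1 - dp))
    (st : ℕ) (hst : 1 ≤ st)
    (hrho : 0 < rhoMinus A ((supp xbar).card + st))
    (hlam0 : 0 < linf (Aᵀ.mulVec b))
    (eta : ℝ) (heta0 : 0 < eta) (heta1 : eta < 1) (K : ℕ)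
    (xhat : Fin n → ℝ) (hsp : l0on (supp xbar)ᶜ xhat ≤ st)
    (homega : omega A b (eta ^ (K + 1) * linf (Aᵀ.mulVec b)) xhat ≤
      dp * (eta ^ (K + 1) * linf (Aᵀ.mulVec b))) :
    l2 (xhat - xbar) ≤
      eta ^ (K + 1) * (2 * linf (Aᵀ.mulVec b) * Real.sqrt ((supp xbar).card : ℝ)) /
        rhoMinus A ((supp xbar).card + st) := by
  classical
  set S := supp xbar with hSdef
  set lam0 := linf (Aᵀ.mulVec b) with hl0def
  set lam : ℝ := eta ^ (K + 1) * lam0 with hlamdef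
  set ρ := rhoMinus A (S.card + st) with hrdef
  have hlampos : 0 < lam := by positivity
  set h : Fin n → ℝ := xhat - xbar with hhdef
  have happ : ∀ i, h i = xhat i - xbar i := fun i => rfl
  -- sparsity of h
  have hsupp : l0 h ≤ S.card + st := by
    have hsub : supp h ⊆ S ∪ Sᶜ.filter (fun i => xhat i ≠ 0) := by
      intro i hi
      simp only [supp, Finset.mem_filter, Finset.mem_univ, true_and] at hi
      by_cases hiS : i ∈ S
      · exact Finset.mem_union_left _ hiS
      · refine Finset.mem_union_right _ (Finset.mem_filter.mpr ⟨Finset.mem_compl.mpr hiS, ?_⟩)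
        have hx0 : xbar i = 0 := by
          by_contra hx
          exact hiS (Finset.mem_filter.mpr ⟨Finset.mem_univ i, hx⟩)
        intro hxh
        exact hi (by rw [happ i, hx0, hxh, sub_zero])
    calc l0 h ≤ (S ∪ Sᶜ.filter (fun i => xhat i ≠ 0)).card := Finset.card_le_card hsub
      _ ≤ S.card + (Sᶜ.filter (fun i => xhat i ≠ 0)).card := Finset.card_union_le _ _
      _ ≤ S.card + st := by exact Nat.add_le_add_left hsp _
  by_cases hne : h = 0
  · rw [hne]
    have : l2 (0 : Fin n → ℝ) = 0 := by
      simp [l2, sqnorm]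
    rw [this]
    positivity
  · -- nonzero case
    have hsqpos : 0 < sqnorm h := sqnorm_pos hne
    have hl2pos : 0 < l2 h := Real.sqrt_pos.mpr hsqpos
    -- restricted eigenvalue bound
    have hrle : ρ * sqnorm h ≤ sqnorm (A.mulVec h) := by
      have hbdd : BddBelow {r | ∃ x : Fin n → ℝ, x ≠ 0 ∧ l0 x ≤ S.card + st ∧
          r = sqnorm (A.mulVec x) / sqnorm x} := by
        refine ⟨0, fun r hr => ?_⟩
        obtain ⟨x, hx, _, rfl⟩ := hr
        exact div_nonneg (sqnorm_nonneg _) (sqnorm_nonneg _)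
      have hmem : sqnorm (A.mulVec h) / sqnorm h ∈ {r | ∃ x : Fin n → ℝ, x ≠ 0 ∧
          l0 x ≤ S.card + st ∧ r = sqnorm (A.mulVec x) / sqnorm x} :=
        ⟨h, hne, hsupp, rfl⟩
      have hle : ρ ≤ sqnorm (A.mulVec h) / sqnorm h := csInf_le hbdd hmem
      exact (le_div_iff₀ hsqpos).mp hle
    -- the omega set is nonempty
    have hΩne : {r | ∃ ξ : Fin n → ℝ, IsSubgrad xhat ξ ∧
        r = linf (fun i => grad A b xhat i + lam * ξ i)}.Nonempty := by
      refine ⟨_, ⟨fun i => Real.sign (xhat i), fun i => ⟨fun _ => rfl, fun hx => ?_⟩, rfl⟩⟩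
      simp [hx]
    -- key inequality via epsilon argument
    have hkey : sqnorm (A.mulVec h) ≤ 2 * lam * (Real.sqrt (S.card : ℝ) * l2 h) := by
      refine le_of_forall_pos_le_add fun ε hε => ?_
      set a := l1on S h with hadef
      set c := l1on Sᶜ h with hcdef
      have ha0 : 0 ≤ a := l1on_nonneg _ _
      have hc0 : 0 ≤ c := l1on_nonneg _ _
      set ε' : ℝ := min ((1 - dp) * lam) (ε / (a + 1)) with hε'def
      have hε'pos : 0 < ε' := lt_min (by nlinarith) (by positivity)
      have hε'le1 : ε' ≤ (1 - dp) * lam := min_le_left _ _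
      have hε'le2 : ε' * (a + 1) ≤ ε := by
        have : ε' ≤ ε / (a + 1) := min_le_right _ _
        exact (le_div_iff₀ (by positivity)).mp this
      have homega' : omega A b lam xhat < dp * lam + ε' := lt_of_le_of_lt homega (by linarith)
      obtain ⟨r, hrmem, hrlt⟩ := exists_lt_of_csInf_lt hΩne homega'
      obtain ⟨ξ, hξ, rfl⟩ := hrmem
      set w : Fin n → ℝ := fun i => grad A b xhat i + lam * ξ i with hwdef
      -- sqnorm (A h) = dot h (grad A b xhat)
      have hgrad : sqnorm (A.mulVec h) = dot h (grad A b xhat) := by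
        rw [grad, dot_transpose_mulVec, hb, ← Matrix.mulVec_sub, ← hhdef, dot_self_eq]
      have hdecomp : dot h w = dot h (grad A b xhat) + lam * dot h ξ := dot_add_smul _ _ _ _
      -- dot h w bound
      have hdw : dot h w ≤ (a + c) * (dp * lam + ε') := by
        have h1 : dot h w ≤ l1 h * linf w := dot_le_l1_mul_linf _ _
        have h2 : l1 h = a + c := by
          rw [hadef, hcdef, l1on, l1on, l1, Finset.sum_add_sum_compl]
        have h3 : 0 ≤ l1 h := by rw [h2]; linarith
        calc dot h w ≤ l1 h * linf w := h1
          _ ≤ l1 h * (dp * lam + ε') := mul_le_mul_of_nonneg_left hrlt.le h3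
          _ = (a + c) * (dp * lam + ε') := by rw [h2]
      -- dot h ξ lower bound
      have hdxi : c - a ≤ dot h ξ := by
        have hsplit : dot h ξ = ∑ i ∈ S, h i * ξ i + ∑ i ∈ Sᶜ, h i * ξ i := by
          rw [dot, Finset.sum_add_sum_compl]
        have hS : -a ≤ ∑ i ∈ S, h i * ξ i := by
          rw [hadef, l1on, ← Finset.sum_neg_distrib]
          refine Finset.sum_le_sum fun i _ => ?_
          have h1 : |h i * ξ i| ≤ |h i| := by
            rw [abs_mul]
            calc |h i| * |ξ i| ≤ |h i| * 1 :=
              mul_le_mul_of_nonneg_left (hξ.abs_le' i) (abs_nonneg _)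
              _ = |h i| := mul_one _
          linarith [neg_abs_le (h i * ξ i), abs_nonneg (h i * ξ i)]
        have hSc : ∑ i ∈ Sᶜ, h i * ξ i = c := by
          rw [hcdef, l1on]
          refine Finset.sum_congr rfl fun i hi => ?_
          have hx0 : xbar i = 0 := by
            have := Finset.mem_compl.mp hi
            by_contra hx
            exact this (Finset.mem_filter.mpr ⟨Finset.mem_univ i, hx⟩)
          have hhi : h i = xhat i := by rw [happ i, hx0, sub_zero]
          rw [hhi, hξ.mul_self' i, ← hhi]
        linarith [hsplit, hS, hSc.ge, hSc.le]
      -- combine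
      have hmain : sqnorm (A.mulVec h) ≤ (2 * lam + ε') * a := by
        have h1 : sqnorm (A.mulVec h) = dot h w - lam * dot h ξ := by
          rw [hgrad]; linarith [hdecomp]
        have h2 : lam * (c - a) ≤ lam * dot h ξ :=
          mul_le_mul_of_nonneg_left hdxi hlampos.le
        have h3 : dp * lam + ε' - lam ≤ 0 := by linarith
        have h4 : sqnorm (A.mulVec h) ≤ (a + c) * (dp * lam + ε') - lam * (c - a) := by
          rw [h1]; linarith [hdw, h2]
        have h5 : (a + c) * (dp * lam + ε') - lam * (c - a)
            = (dp * lam + ε' + lam) * a + (dp * lam + ε' - lam) * c := by ring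
        have h6 : (dp * lam + ε' - lam) * c ≤ 0 :=
          mul_nonpos_of_nonpos_of_nonneg h3 hc0
        have h7 : (dp * lam + ε' + lam) * a ≤ (2 * lam + ε') * a :=
          mul_le_mul_of_nonneg_right (by nlinarith) ha0
        linarith
      have hcs : a ≤ Real.sqrt (S.card : ℝ) * l2 h := l1on_le_sqrt S h
      have h8 : 2 * lam * a ≤ 2 * lam * (Real.sqrt (S.card : ℝ) * l2 h) :=
        mul_le_mul_of_nonneg_left hcs (by linarith)
      have h9 : ε' * a ≤ ε := by
        have hr : ε' * a = ε' * (a + 1) - ε' := by ring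
        rw [hr]; linarith [hε'le2, hε'pos]
      have h10 : (2 * lam + ε') * a = 2 * lam * a + ε' * a := by ring
      linarith
    -- finish
    have hfin : ρ * sqnorm h ≤ 2 * lam * (Real.sqrt (S.card : ℝ) * l2 h) :=
      le_trans hrle hkey
    have hsq : sqnorm h = l2 h ^ 2 := (Real.sq_sqrt (sqnorm_nonneg h)).symm
    have hρl2 : ρ * l2 h ≤ 2 * lam * Real.sqrt (S.card : ℝ) := by
      have : (ρ * l2 h) * l2 h ≤ (2 * lam * Real.sqrt (S.card : ℝ)) * l2 h := by
        calc (ρ * l2 h) * l2 h = ρ * sqnorm h := by rw [hsq]; ring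
          _ ≤ 2 * lam * (Real.sqrt (S.card : ℝ) * l2 h) := hfin
          _ = (2 * lam * Real.sqrt (S.card : ℝ)) * l2 h := by ring
      exact le_of_mul_le_mul_right this hl2pos
    rw [le_div_iff₀ hrho]
    calc l2 h * ρ = ρ * l2 h := by ring
      _ ≤ 2 * lam * Real.sqrt (S.card : ℝ) := hρl2
      _ = eta ^ (K + 1) * (2 * lam0 * Real.sqrt (S.card : ℝ)) := by rw [hlamdef]; ring


end PGH
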